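/- Let s ≥ 1 be an integer, I* ⊆ ℝ^d open, and h : I* → ℝ of class C^{s+1} such that ω := ∇h is a C^s diffeomorphism from I* onto an open subset of ℝ^d. Let (k₁,l₁), …, (k_j, l_j) ∈ ℤ^d × ℤ with k_i ≠ 0 for every i, and let R_{k_i,l_i} := {I ∈ I* : ω(I)·k_i + l_i = 0}. If the intersection R_{k₁,l₁} ∩ … ∩ R_{k_j,l_j} is nonempty, then it is a C^s embedded submanifold of I* of codimension r, where r is the rank of the ℤ-module generated by (k₁,l₁), …, (k_j,l_j) in ℤ^{d+1} (i.e., the dimension of their ℚ-linear span); moreover, in that case r equals the dimension of the ℝ-linear span of k₁, …, k_j in ℝ^d. -/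

import Mathlib

open Set Submodule Module Matrix

noncomputable def ratCastLin (n : ℕ) : (Fin n → ℚ) →ₗ[ℚ] (Fin n → ℝ) where
  toFun v := fun t => (v t : ℝ)
  map_add' x y := by ext t; simp
  map_smul' c x := by ext t; simp [Rat.smul_def]

lemma ratCastLin_apply {n : ℕ} (v : Fin n → ℚ) (t : Fin n) :
    ratCastLin n v t = (v t : ℝ) := rfl

lemma ratCastLin_injective (n : ℕ) : Function.Injective (ratCastLin n) := by
  intro x y hxy
  ext t
  have : ((x t : ℝ)) = (y t : ℝ) := congrFun hxy t
  exact_mod_cast this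

lemma linearIndependent_ratCast {n : ℕ} {ι : Type*} [Fintype ι]
    {v : ι → (Fin n → ℚ)} (hv : LinearIndependent ℚ v) :
    LinearIndependent ℝ (fun i => ratCastLin n (v i)) := by
  classical
  set G : Matrix ι ι ℚ := Matrix.of (fun a b => ∑ t, v a t * v b t) with hG
  have hdet : G.det ≠ 0 := by
    intro h0
    obtain ⟨c, hc0, hGc⟩ := (Matrix.exists_mulVec_eq_zero_iff).2 h0
    set S : Fin n → ℚ := fun t => ∑ b, c b * v b t with hS
    have h1 : ∀ a, ∑ t, v a t * S t = 0 := by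
      intro a
      have hrow : ∑ b, (∑ t, v a t * v b t) * c b = 0 := by
        have := congrFun hGc a
        simpa [Matrix.mulVec, dotProduct, hG] using this
      calc ∑ t, v a t * S t = ∑ t, ∑ b, v a t * (c b * v b t) := by
            simp [hS, Finset.mul_sum]
        _ = ∑ b, ∑ t, v a t * (c b * v b t) := Finset.sum_comm
        _ = ∑ b, (∑ t, v a t * v b t) * c b := by
            refine Finset.sum_congr rfl fun b _ => ?_
            rw [Finset.sum_mul]
            exact Finset.sum_congr rfl fun t _ => by ring
        _ = 0 := hrow
    have h2 : ∑ t, S t ^ 2 = 0 := by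
      calc ∑ t, S t ^ 2 = ∑ t, ∑ a, c a * (v a t * S t) := by
            refine Finset.sum_congr rfl fun t _ => ?_
            rw [pow_two, hS]
            rw [Finset.sum_mul]
            exact Finset.sum_congr rfl fun a _ => by ring
        _ = ∑ a, ∑ t, c a * (v a t * S t) := Finset.sum_comm
        _ = ∑ a, c a * ∑ t, v a t * S t := by
            refine Finset.sum_congr rfl fun a _ => ?_
            rw [Finset.mul_sum]
        _ = 0 := by simp [h1]
    have hSz : ∀ t, S t = 0 := by
      intro t
      have := (Finset.sum_eq_zero_iff_of_nonneg
        (fun t _ => sq_nonneg (S t))).1 h2 t (Finset.mem_univ t)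
      exact pow_eq_zero_iff (two_ne_zero) |>.1 this
    have hcz : ∀ i, c i = 0 := by
      refine Fintype.linearIndependent_iff.1 hv c ?_
      ext t
      simpa [hS, Finset.sum_apply] using hSz t
    exact hc0 (funext hcz)
  rw [Fintype.linearIndependent_iff]
  intro c hc
  have hct : ∀ t, ∑ b, c b * (v b t : ℝ) = 0 := by
    intro t
    have := congrFun hc t
    simpa [ratCastLin_apply, Finset.sum_apply] using this
  have hGRc : (G.map (Rat.castHom ℝ)).mulVec c = 0 := by
    ext a
    have : ∑ b, ((∑ t, v a t * v b t : ℚ) : ℝ) * c b = 0 := by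
      calc ∑ b, ((∑ t, v a t * v b t : ℚ) : ℝ) * c b
          = ∑ b, ∑ t, (v a t : ℝ) * (c b * (v b t : ℝ)) := by
            refine Finset.sum_congr rfl fun b _ => ?_
            push_cast
            rw [Finset.sum_mul]
            exact Finset.sum_congr rfl fun t _ => by ring
        _ = ∑ t, ∑ b, (v a t : ℝ) * (c b * (v b t : ℝ)) := Finset.sum_comm
        _ = ∑ t, (v a t : ℝ) * ∑ b, c b * (v b t : ℝ) := by
            refine Finset.sum_congr rfl fun t _ => ?_
            rw [Finset.mul_sum]
        _ = 0 := by simp [hct]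
    simpa [Matrix.mulVec, dotProduct, hG, Matrix.map_apply] using this
  have hdetR : (G.map (Rat.castHom ℝ)).det ≠ 0 := by
    have hdm : ((G.det : ℚ) : ℝ) = (G.map (Rat.castHom ℝ)).det :=
      RingHom.map_det (Rat.castHom ℝ) G
    rw [← hdm]
    simpa using hdet
  have hc0 : c = 0 := by
    by_contra hne
    exact hdetR ((Matrix.exists_mulVec_eq_zero_iff).1 ⟨c, hne, hGRc⟩)
  exact fun i => congrFun hc0 i

lemma finrank_span_rat_real {n : ℕ} (S : Set (Fin n → ℚ)) :
    Module.finrank ℚ (Submodule.span ℚ S) =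
      Module.finrank ℝ (Submodule.span ℝ (ratCastLin n '' S)) := by
  classical
  apply le_antisymm
  · -- rℚ ≤ rℝ, via the hard independence transfer
    obtain ⟨t, hts, hsp, hind⟩ := exists_linearIndependent ℚ S
    have htfin : t.Finite := hind.setFinite
    haveI : Fintype t := htfin.fintype
    have hindR : LinearIndependent ℝ (fun x : t => ratCastLin n (x : Fin n → ℚ)) :=
      linearIndependent_ratCast hind
    have e1 : Module.finrank ℚ (Submodule.span ℚ S) = Fintype.card t := by
      rw [← hsp, finrank_span_set_eq_card hind, Set.toFinset_card]
    have e2 : Module.finrank ℝ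
        (Submodule.span ℝ (Set.range fun x : t => ratCastLin n (x : Fin n → ℚ)))
        = Fintype.card t := finrank_span_eq_card hindR
    have hsub : Submodule.span ℝ (Set.range fun x : t => ratCastLin n (x : Fin n → ℚ))
        ≤ Submodule.span ℝ (ratCastLin n '' S) := by
      apply Submodule.span_mono
      rw [← Set.image_eq_range]
      exact Set.image_mono hts
    rw [e1, ← e2]
    exact Submodule.finrank_mono hsub
  · -- rℝ ≤ rℚ
    obtain ⟨t, hts, hsp, hind⟩ := exists_linearIndependent ℚ S
    have htfin : t.Finite := hind.setFinite
    haveI : Fintype t := htfin.fintype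
    haveI : Fintype (ratCastLin n '' t) := (htfin.image _).fintype
    have h1 : Submodule.span ℝ (ratCastLin n '' S) = Submodule.span ℝ (ratCastLin n '' t) := by
      apply le_antisymm
      · rw [Submodule.span_le]
        rintro y ⟨x, hxS, rfl⟩
        have hx : x ∈ Submodule.span ℚ t := hsp ▸ Submodule.subset_span hxS
        have hmem : ratCastLin n x ∈ Submodule.map (ratCastLin n) (Submodule.span ℚ t) :=
          ⟨x, hx, rfl⟩
        rw [Submodule.map_span] at hmem
        exact Submodule.span_le_restrictScalars ℚ ℝ _ hmem
      · exact Submodule.span_mono (Set.image_mono hts)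
    have e3 : Module.finrank ℚ (Submodule.span ℚ S) = Fintype.card t := by
      rw [← hsp, finrank_span_set_eq_card hind, Set.toFinset_card]
    have e4 : Fintype.card (ratCastLin n '' t : Set (Fin n → ℝ)) = Fintype.card t :=
      Set.card_image_of_injective t (ratCastLin_injective n)
    calc Module.finrank ℝ (Submodule.span ℝ (ratCastLin n '' S))
        = Module.finrank ℝ (Submodule.span ℝ (ratCastLin n '' t)) := by rw [h1]
      _ ≤ (ratCastLin n '' t).toFinset.card := finrank_span_le_card _
      _ = Fintype.card t := by rw [Set.toFinset_card]; exact e4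
      _ = Module.finrank ℚ (Submodule.span ℚ S) := e3.symm


open Set

/-- `M` is a `C^s` embedded submanifold of codimension `r` of the open set `Ω ⊆ ℝ^d`:
near each of its points it is a regular level set of a `C^s` submersion to `ℝ^r`. -/
def IsCodimSubmanifoldOn (d s r : ℕ) (Ω M : Set (Fin d → ℝ)) : Prop :=
  ∀ x ∈ M, ∃ U : Set (Fin d → ℝ), IsOpen U ∧ x ∈ U ∧ U ⊆ Ω ∧
    ∃ f : (Fin d → ℝ) → (Fin r → ℝ),
      ContDiffOn ℝ (s : ℕ∞) f U ∧
      M ∩ U = {y ∈ U | f y = 0} ∧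
      ∀ y ∈ M ∩ U, Function.Surjective ⇑(fderiv ℝ f y)

/-- a nonempty intersection of resonance surfaces
`R_{kᵢ,lᵢ} = {I ∈ I* : ω(I)·kᵢ + lᵢ = 0}` is a `C^s` submanifold of codimension the rank
of the ℤ-module generated by the `(kᵢ,lᵢ)` (= dimension of their ℚ-span), which moreover
equals the dimension of the ℝ-span of the `kᵢ`. -/
theorem stmt7 (d s j : ℕ) (hs : 1 ≤ s) (hj : 1 ≤ j)
    (Istar : Set (Fin d → ℝ)) (hIo : IsOpen Istar)
    (h : (Fin d → ℝ) → ℝ) (hh : ContDiffOn ℝ ((s + 1 : ℕ) : ℕ∞) h Istar)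
    (ω : (Fin d → ℝ) → (Fin d → ℝ))
    (hωdef : ∀ I ∈ Istar, ∀ i, ω I i = fderiv ℝ h I (Pi.single i 1))
    (hωsm : ContDiffOn ℝ (s : ℕ∞) ω Istar)
    (V : Set (Fin d → ℝ)) (hV : IsOpen V) (himg : ω '' Istar = V)
    (hinj : InjOn ω Istar)
    (ψ : (Fin d → ℝ) → (Fin d → ℝ)) (hψ : ContDiffOn ℝ (s : ℕ∞) ψ V)
    (hlinv : ∀ I ∈ Istar, ψ (ω I) = I)
    (k : Fin j → Fin d → ℤ) (l : Fin j → ℤ) (hk : ∀ i, k i ≠ 0)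
    (M : Set (Fin d → ℝ))
    (hM : M = ⋂ i : Fin j, {I | I ∈ Istar ∧ (∑ m, ω I m * (k i m : ℝ)) + (l i : ℝ) = 0})
    (hne : M.Nonempty) :
    IsCodimSubmanifoldOn d s
      (Module.finrank ℚ (Submodule.span ℚ (Set.range fun i : Fin j =>
        (Fin.snoc (fun m => ((k i m : ℚ))) ((l i : ℚ)) : Fin (d + 1) → ℚ))))
      Istar M ∧
    Module.finrank ℚ (Submodule.span ℚ (Set.range fun i : Fin j =>
        (Fin.snoc (fun m => ((k i m : ℚ))) ((l i : ℚ)) : Fin (d + 1) → ℚ)))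
      = Module.finrank ℝ (Submodule.span ℝ (Set.range fun i : Fin j =>
          (fun m => ((k i m : ℝ)) : Fin d → ℝ))) := by
  classical
  set q : Fin j → (Fin (d+1) → ℚ) := fun i =>
    (Fin.snoc (fun m => ((k i m : ℚ))) ((l i : ℚ)) : Fin (d + 1) → ℚ) with hq
  set u : Fin j → (Fin d → ℝ) := fun i => (fun m => ((k i m : ℝ)) : Fin d → ℝ) with hu
  set w : Fin j → (Fin (d+1) → ℝ) := fun i => ratCastLin (d+1) (q i) with hw
  obtain ⟨I₀, hI₀⟩ := hne
  have hMdef : ∀ I, I ∈ M ↔ (I ∈ Istar ∧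
      ∀ i, (∑ m, ω I m * (k i m : ℝ)) + (l i : ℝ) = 0) := by
    intro I
    rw [hM]
    simp only [Set.mem_iInter, Set.mem_setOf_eq]
    constructor
    · intro H
      exact ⟨(H ⟨0, hj⟩).1, fun i => (H i).2⟩
    · rintro ⟨h1, h2⟩ i
      exact ⟨h1, h2 i⟩
  have hMsub : M ⊆ Istar := fun I hI => ((hMdef I).1 hI).1
  have hsone : (1 : ℕ∞) ≤ (s : ℕ∞) := by exact_mod_cast hs
  have hsone' : (1 : WithTop ℕ∞) ≤ ((s : ℕ∞) : WithTop ℕ∞) := by exact_mod_cast hs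
  -- basic coordinates of w
  have hwcast : ∀ i m, w i (Fin.castSucc m) = (k i m : ℝ) := by
    intro i m
    simp [hw, hq, ratCastLin_apply, Fin.snoc_castSucc]
  have hwlast : ∀ i, w i (Fin.last d) = (l i : ℝ) := by
    intro i
    simp [hw, hq, ratCastLin_apply, Fin.snoc_last]
  -- the projection P and the functionals L
  set P : (Fin (d+1) → ℝ) →ₗ[ℝ] (Fin d → ℝ) :=
    LinearMap.funLeft ℝ ℝ Fin.castSucc with hP
  have hPapp : ∀ (x : Fin (d+1) → ℝ) (m : Fin d), P x m = x (Fin.castSucc m) :=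
    fun x m => rfl
  set L : (Fin d → ℝ) → ((Fin (d+1) → ℝ) →ₗ[ℝ] ℝ) := fun Ωv =>
    (∑ m, Ωv m • LinearMap.proj (R := ℝ) (φ := fun _ : Fin (d+1) => ℝ) (Fin.castSucc m))
      + LinearMap.proj (Fin.last d) with hL
  have hLapp : ∀ (Ωv : Fin d → ℝ) (x : Fin (d+1) → ℝ),
      L Ωv x = (∑ m, Ωv m * x (Fin.castSucc m)) + x (Fin.last d) := by
    intro Ωv x
    simp [hL, LinearMap.sum_apply, LinearMap.smul_apply, LinearMap.proj_apply, smul_eq_mul]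
  have hLw : ∀ (y : Fin d → ℝ) (i : Fin j),
      L (ω y) (w i) = (∑ m, ω y m * (k i m : ℝ)) + (l i : ℝ) := by
    intro y i
    rw [hLapp, hwlast]
    congr 1
    exact Finset.sum_congr rfl fun m _ => by rw [hwcast]
  have hPw : ∀ i, P (w i) = u i := by
    intro i
    ext m
    rw [hPapp, hwcast]
  -- all w i are killed by L (ω I₀)
  have hWker : Submodule.span ℝ (Set.range w) ≤ LinearMap.ker (L (ω I₀)) := by
    rw [Submodule.span_le]
    rintro x ⟨i, rfl⟩
    rw [SetLike.mem_coe, LinearMap.mem_ker, hLw]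
    exact ((hMdef I₀).1 hI₀).2 i
  -- P is injective on the span of the w's
  have hkerP : ∀ x ∈ Submodule.span ℝ (Set.range w), P x = 0 → x = 0 := by
    intro x hx hPx
    have hLx : L (ω I₀) x = 0 := hWker hx
    rw [hLapp] at hLx
    have hcs : ∀ m : Fin d, x (Fin.castSucc m) = 0 := by
      intro m
      have := congrFun hPx m
      rwa [hPapp] at this
    have hlast : x (Fin.last d) = 0 := by
      have : (∑ m, ω I₀ m * x (Fin.castSucc m)) = 0 := by
        refine Finset.sum_eq_zero fun m _ => ?_
        rw [hcs m, mul_zero]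
      rw [this, zero_add] at hLx
      exact hLx
    ext t
    refine Fin.lastCases ?_ ?_ t
    · exact hlast
    · exact hcs
  have hPimg : P '' Set.range w = Set.range u := by
    rw [← Set.range_comp]
    exact congrArg Set.range (funext hPw)
  -- rank equality between span w and span u
  have hfr : Module.finrank ℝ (Submodule.span ℝ (Set.range w))
      = Module.finrank ℝ (Submodule.span ℝ (Set.range u)) := by
    have hinj' : Function.Injective
        (P.comp (Submodule.span ℝ (Set.range w)).subtype) := by
      intro a b hab
      apply Subtype.ext
      have hsub : ((a : Fin (d+1) → ℝ) - b) ∈ Submodule.span ℝ (Set.range w) :=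
        sub_mem a.2 b.2
      have : P ((a : Fin (d+1) → ℝ) - b) = 0 := by
        rw [map_sub]
        simpa [sub_eq_zero] using hab
      have := hkerP _ hsub this
      exact sub_eq_zero.1 this
    have hthis := LinearMap.finrank_range_of_inj hinj'
    rw [LinearMap.range_comp, Submodule.range_subtype, Submodule.map_span, hPimg] at hthis
    exact hthis.symm
  -- the rank equality (second conjunct)
  have hqw : ratCastLin (d+1) '' Set.range q = Set.range w := by
    rw [← Set.range_comp]
    rfl
  have hrank : Module.finrank ℚ (Submodule.span ℚ (Set.range q))
      = Module.finrank ℝ (Submodule.span ℝ (Set.range u)) := by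
    rw [finrank_span_rat_real (Set.range q), hqw, hfr]
  refine ⟨?_, hrank⟩
  rw [hrank]
  -- choose an independent spanning subset of range u
  obtain ⟨t, hts, htsp, htind⟩ := exists_linearIndependent ℝ (Set.range u)
  have htfin : t.Finite := htind.setFinite
  haveI : Fintype t := htfin.fintype
  have hcardt : Fintype.card t = Module.finrank ℝ (Submodule.span ℝ (Set.range u)) := by
    rw [← htsp, finrank_span_set_eq_card htind, Set.toFinset_card]
  set rk := Module.finrank ℝ (Submodule.span ℝ (Set.range u)) with hrk
  let e : t ≃ Fin rk := Fintype.equivFinOfCardEq hcardt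
  set v : Fin rk → (Fin d → ℝ) := fun a => ((e.symm a : Fin d → ℝ)) with hv
  have hrangev : Set.range v = t := by
    rw [hv, show (fun a => ((e.symm a : Fin d → ℝ))) = Subtype.val ∘ e.symm from rfl,
      Set.range_comp, Equiv.range_eq_univ, Set.image_univ, Subtype.range_coe]
  have hvmem : ∀ a, v a ∈ Set.range u := fun a => hts (e.symm a).2
  choose idx hidx using hvmem
  -- key: each w i lies in the span of the chosen w's
  have hkey : ∀ i, w i ∈ Submodule.span ℝ (Set.range fun a => w (idx a)) := by
    have hW'le : Submodule.span ℝ (Set.range fun a => w (idx a))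
        ≤ Submodule.span ℝ (Set.range w) := by
      apply Submodule.span_mono
      rintro x ⟨a, rfl⟩
      exact ⟨idx a, rfl⟩
    have h1 : P '' (Set.range fun a => w (idx a)) = Set.range v := by
      rw [← Set.range_comp]
      exact congrArg Set.range (funext fun a => by
        simp only [Function.comp_apply]
        rw [hPw, hidx])
    have hmapeq : Submodule.map P (Submodule.span ℝ (Set.range fun a => w (idx a)))
        = Submodule.map P (Submodule.span ℝ (Set.range w)) := by
      rw [Submodule.map_span, Submodule.map_span, hPimg, h1, hrangev, htsp]
    intro i
    have hwi : P (w i) ∈ Submodule.map P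
        (Submodule.span ℝ (Set.range fun a => w (idx a))) := by
      rw [hmapeq]
      exact ⟨w i, Submodule.subset_span ⟨i, rfl⟩, rfl⟩
    obtain ⟨x, hxW', hPx⟩ := hwi
    have hsub0 : w i - x = 0 := by
      refine hkerP _ (sub_mem (Submodule.subset_span ⟨i, rfl⟩) (hW'le hxW')) ?_
      rw [map_sub, hPx, sub_self]
    have hwix : w i = x := by rwa [sub_eq_zero] at hsub0
    rw [hwix]
    exact hxW'
  -- the submersion f
  set A : (Fin d → ℝ) →L[ℝ] (Fin rk → ℝ) := ContinuousLinearMap.pi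
    (fun a => ∑ m, v a m •
      (ContinuousLinearMap.proj (R := ℝ) (φ := fun _ : Fin d => ℝ) m)) with hA
  have hAapp : ∀ (x : Fin d → ℝ) a, A x a = ∑ m, v a m * x m := by
    intro x a
    simp [hA, ContinuousLinearMap.pi_apply, ContinuousLinearMap.sum_apply, smul_eq_mul]
  set cvec : Fin rk → ℝ := fun a => (l (idx a) : ℝ) with hcvec
  set f : (Fin d → ℝ) → (Fin rk → ℝ) := fun I => A (ω I) + cvec with hf
  have hfapp : ∀ I a, f I a = (∑ m, ω I m * (k (idx a) m : ℝ)) + (l (idx a) : ℝ) := by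
    intro I a
    simp only [hf, Pi.add_apply]
    rw [hAapp]
    congr 1
    refine Finset.sum_congr rfl fun m _ => ?_
    rw [← hidx a]
    exact mul_comm _ _
  intro x hx
  refine ⟨Istar, hIo, hMsub hx, subset_rfl, f, ?_, ?_, ?_⟩
  · -- smoothness
    have h1 : ContDiffOn ℝ (s : ℕ∞) (fun I => A (ω I)) Istar :=
      A.contDiff.comp_contDiffOn hωsm
    exact h1.add contDiffOn_const
  · -- level set description
    ext y
    simp only [Set.mem_inter_iff, Set.mem_setOf_eq]
    constructor
    · rintro ⟨hyM, hyI⟩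
      refine ⟨hyI, ?_⟩
      funext a
      rw [hfapp]
      simp only [Pi.zero_apply]
      exact ((hMdef y).1 hyM).2 (idx a)
    · rintro ⟨hyI, hf0⟩
      refine ⟨(hMdef y).2 ⟨hyI, fun i => ?_⟩, hyI⟩
      have hker : Submodule.span ℝ (Set.range fun a => w (idx a))
          ≤ LinearMap.ker (L (ω y)) := by
        rw [Submodule.span_le]
        rintro z ⟨a, rfl⟩
        rw [SetLike.mem_coe, LinearMap.mem_ker, hLw]
        have hza := congrFun hf0 a
        rw [hfapp] at hza
        simpa using hza
      have hmem := hker (hkey i)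
      rw [LinearMap.mem_ker, hLw] at hmem
      exact hmem
  · -- surjectivity of the differential
    intro y hy
    have hyI : y ∈ Istar := hy.2
    have hωdiff : DifferentiableAt ℝ ω y :=
      (hωsm.differentiableOn (lt_of_lt_of_le zero_lt_one hsone').ne').differentiableAt (hIo.mem_nhds hyI)
    have hωd : HasFDerivAt ω (fderiv ℝ ω y) y := hωdiff.hasFDerivAt
    have hfd : HasFDerivAt f (A.comp (fderiv ℝ ω y)) y := by
      have h0 : HasFDerivAt (fun I => A (ω I)) (A.comp (fderiv ℝ ω y)) y :=
        (A.hasFDerivAt).comp y hωd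
      exact h0.add_const cvec
    rw [hfd.fderiv]
    have hDωsurj : Function.Surjective ⇑(fderiv ℝ ω y) := by
      have hωyV : ω y ∈ V := himg ▸ ⟨y, hyI, rfl⟩
      have hψdiff : DifferentiableAt ℝ ψ (ω y) :=
        (hψ.differentiableOn (lt_of_lt_of_le zero_lt_one hsone').ne').differentiableAt (hV.mem_nhds hωyV)
      have hcomp : HasFDerivAt (ψ ∘ ω) ((fderiv ℝ ψ (ω y)).comp (fderiv ℝ ω y)) y :=
        hψdiff.hasFDerivAt.comp y hωd
      have hid : ψ ∘ ω =ᶠ[nhds y] id := by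
        filter_upwards [hIo.mem_nhds hyI] with z hz
        exact hlinv z hz
      have hcomp' : HasFDerivAt (ψ ∘ ω) (ContinuousLinearMap.id ℝ (Fin d → ℝ)) y :=
        (hasFDerivAt_id y).congr_of_eventuallyEq hid
      have huniq := hcomp.unique hcomp'
      have hfun : ∀ z, (fderiv ℝ ψ (ω y)) ((fderiv ℝ ω y) z) = z := by
        intro z
        have := congrArg (fun (T : (Fin d → ℝ) →L[ℝ] (Fin d → ℝ)) => T z) huniq
        simpa using this
      have hinjD : Function.Injective ⇑(fderiv ℝ ω y) := by
        intro a b hab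
        rw [← hfun a, ← hfun b, hab]
      exact LinearMap.injective_iff_surjective.mp hinjD
    have hAsurj : Function.Surjective ⇑A := by
      have h2 : LinearMap.range (Matrix.of v).mulVecLin = ⊤ := by
        apply Submodule.eq_top_of_finrank_eq
        have hr1 : Module.finrank ℝ (LinearMap.range (Matrix.of v).mulVecLin)
            = (Matrix.of v).rank := rfl
        rw [hr1, Matrix.rank_eq_finrank_span_row]
        have hrows : Set.range (Matrix.of v).row = Set.range v := rfl
        rw [hrows, hrangev, htsp, Module.finrank_fin_fun]
      intro z
      have hz : z ∈ LinearMap.range (Matrix.of v).mulVecLin := h2 ▸ Submodule.mem_top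
      obtain ⟨x0, hx0⟩ := hz
      refine ⟨x0, ?_⟩
      ext a
      rw [hAapp]
      have hxa := congrFun hx0 a
      simpa [Matrix.mulVecLin_apply, Matrix.mulVec, dotProduct] using hxa
    rw [ContinuousLinearMap.coe_comp']
    exact hAsurj.comp hDωsurj
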